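/- Consider the positive-recurrent imbalance chain z(k+1) = z(k) + a^c(z(k),k) - a^s(z(k),k) on ℤ, where given z(k)=z, the arrivals satisfy E[a^c(z,k)] = λ* + ε·φ^c(z/τ), E[a^s(z,k)] = λ* + ε·φ^s(z/τ), |a^c|,|a^s| ≤ A_max a.s., with φ^c, φ^s bounded by φ_max and satisfying the negative drift condition (there exist δ, K > 0 with φ^c(x)-φ^s(x) < -δ for x > K and > δ for x < -K). Let z̄ be a steady-state random variable and z̄⁺ its one-step update. Then E[z̄⁺·(sgn(z̄⁺) - sgn(z̄))] = -ε·E[(φ^c(z̄/τ) - φ^s(z̄/τ))·sgn(z̄)]. -/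

import Mathlib

open MeasureTheory

/-- Steady-state drift identity for the test function |z| = z·sgn(z) in the two-sided queue:
E[z̄⁺(sgn(z̄⁺) - sgn(z̄))] = -ε E[(φ^c(z̄/τ) - φ^s(z̄/τ)) sgn(z̄)]. -/
theorem stmt12 {Ω : Type*} [MeasurableSpace Ω] (μ : Measure Ω) [IsProbabilityMeasure μ]
    (zbar ac as : Ω → ℤ) (hz : Measurable zbar) (hac : Measurable ac) (has : Measurable as)
    (Amax ε τ φmax δ K : ℝ) (φc φs : ℝ → ℝ)
    (hε : 0 < ε) (hτ : 0 < τ) (hδ : 0 < δ) (hK : 0 < K)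
    (hbmax : ∀ᵐ a ∂μ, |(ac a : ℝ)| ≤ Amax ∧ |(as a : ℝ)| ≤ Amax)
    (hφc : ∀ x, |φc x| ≤ φmax) (hφs : ∀ x, |φs x| ≤ φmax)
    (hdrift1 : ∀ x > K, φc x - φs x < -δ) (hdrift2 : ∀ x < -K, δ < φc x - φs x)
    -- steady state has finite mean absolute imbalance
    (hint : Integrable (fun a => (zbar a : ℝ)) μ)
    -- stationarity: the one-step update z̄⁺ has the same distribution as z̄
    (hstat : μ.map (fun a => zbar a + ac a - as a) = μ.map zbar)
    -- conditional means of the arrivals given the state: E[a^c - a^s | z̄ = z] = ε(φ^c - φ^s)(z/τ)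
    (hcond : ∀ z : ℤ, ∫ a in zbar ⁻¹' {z}, ((ac a : ℝ) - (as a : ℝ)) ∂μ
      = ε * (φc ((z : ℝ) / τ) - φs ((z : ℝ) / τ)) * (μ (zbar ⁻¹' {z})).toReal) :
    let sgn : ℤ → ℝ := fun z => if 0 ≤ z then 1 else -1
    let zplus : Ω → ℤ := fun a => zbar a + ac a - as a
    ∫ a, (zplus a : ℝ) * (sgn (zplus a) - sgn (zbar a)) ∂μ
      = -ε * ∫ a, (φc ((zbar a : ℝ) / τ) - φs ((zbar a : ℝ) / τ)) * sgn (zbar a) ∂μ := by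
  intro sgn zplus
  classical
  -- sgn is bounded by 1 and measurable
  have hsgn_bd : ∀ z : ℤ, |sgn z| ≤ 1 := by
    intro z; simp only [sgn]; split <;> simp
  have hsgn_meas : Measurable sgn := measurable_from_top
  have hzplus_meas : Measurable zplus := (hz.add hac).sub has
  -- cast identity
  have hcast : ∀ a, ((zplus a : ℤ) : ℝ) = (zbar a : ℝ) + (ac a : ℝ) - (as a : ℝ) := by
    intro a; simp only [zplus]; push_cast; ring
  -- z * sgn z = |z|
  have habs : ∀ z : ℤ, (z : ℝ) * sgn z = |(z : ℝ)| := by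
    intro z; by_cases h : 0 ≤ z
    · have : (0:ℝ) ≤ (z:ℝ) := by exact_mod_cast h
      simp [sgn, h, abs_of_nonneg this]
    · have : (z:ℝ) < 0 := by exact_mod_cast not_le.mp h
      simp [sgn, h, abs_of_neg this]
  -- integrabilities
  have hacm : Measurable fun a => (ac a : ℝ) := measurable_from_top.comp hac
  have hasm : Measurable fun a => (as a : ℝ) := measurable_from_top.comp has
  have hacInt : Integrable (fun a => (ac a : ℝ)) μ := by
    refine Integrable.mono' (integrable_const Amax) hacm.aestronglyMeasurable ?_
    filter_upwards [hbmax] with a h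
    simpa [Real.norm_eq_abs] using h.1
  have hasInt : Integrable (fun a => (as a : ℝ)) μ := by
    refine Integrable.mono' (integrable_const Amax) hasm.aestronglyMeasurable ?_
    filter_upwards [hbmax] with a h
    simpa [Real.norm_eq_abs] using h.2
  have hzpInt : Integrable (fun a => ((zplus a : ℤ) : ℝ)) μ := by
    have : (fun a => ((zplus a : ℤ) : ℝ))
        = fun a => (zbar a : ℝ) + (ac a : ℝ) - (as a : ℝ) := funext hcast
    rw [this]; exact (hint.add hacInt).sub hasInt
  have hsz_meas : Measurable fun a => sgn (zbar a) := hsgn_meas.comp hz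
  have hszp_meas : Measurable fun a => sgn (zplus a) := hsgn_meas.comp hzplus_meas
  -- integrability of products
  have I1 : Integrable (fun a => ((zplus a : ℤ) : ℝ) * sgn (zplus a)) μ := by
    refine Integrable.mono' hzpInt.abs
      (((measurable_from_top.comp hzplus_meas : Measurable fun a => ((zplus a : ℤ):ℝ)).mul
        hszp_meas).aestronglyMeasurable) ?_
    filter_upwards with a
    rw [Real.norm_eq_abs, abs_mul]
    calc |((zplus a : ℤ):ℝ)| * |sgn (zplus a)| ≤ |((zplus a : ℤ):ℝ)| * 1 :=
          mul_le_mul_of_nonneg_left (hsgn_bd _) (abs_nonneg _)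
      _ = |((zplus a : ℤ):ℝ)| := mul_one _
  have I2 : Integrable (fun a => ((zplus a : ℤ) : ℝ) * sgn (zbar a)) μ := by
    refine Integrable.mono' hzpInt.abs
      (((measurable_from_top.comp hzplus_meas : Measurable fun a => ((zplus a : ℤ):ℝ)).mul
        hsz_meas).aestronglyMeasurable) ?_
    filter_upwards with a
    rw [Real.norm_eq_abs, abs_mul]
    calc |((zplus a : ℤ):ℝ)| * |sgn (zbar a)| ≤ |((zplus a : ℤ):ℝ)| * 1 :=
          mul_le_mul_of_nonneg_left (hsgn_bd _) (abs_nonneg _)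
      _ = |((zplus a : ℤ):ℝ)| := mul_one _
  have I3 : Integrable (fun a => ((zbar a : ℤ) : ℝ) * sgn (zbar a)) μ := by
    refine Integrable.mono' hint.abs
      (((measurable_from_top.comp hz : Measurable fun a => ((zbar a : ℤ):ℝ)).mul
        hsz_meas).aestronglyMeasurable) ?_
    filter_upwards with a
    rw [Real.norm_eq_abs, abs_mul]
    calc |((zbar a : ℤ):ℝ)| * |sgn (zbar a)| ≤ |((zbar a : ℤ):ℝ)| * 1 :=
          mul_le_mul_of_nonneg_left (hsgn_bd _) (abs_nonneg _)
      _ = |((zbar a : ℤ):ℝ)| := mul_one _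
  have I4 : Integrable (fun a => ((ac a : ℝ) - (as a : ℝ)) * sgn (zbar a)) μ := by
    refine Integrable.mono' (hacInt.sub hasInt).abs
      (((hacm.sub hasm).mul hsz_meas).aestronglyMeasurable) ?_
    filter_upwards with a
    rw [Real.norm_eq_abs, abs_mul]
    calc |((ac a : ℝ) - as a)| * |sgn (zbar a)| ≤ |((ac a : ℝ) - as a)| * 1 :=
          mul_le_mul_of_nonneg_left (hsgn_bd _) (abs_nonneg _)
      _ = |((ac a : ℝ) - as a)| := mul_one _
  have I5 : Integrable
      (fun a => (φc ((zbar a : ℝ) / τ) - φs ((zbar a : ℝ) / τ)) * sgn (zbar a)) μ := by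
    have hm : Measurable
        (fun a => (φc ((zbar a : ℝ) / τ) - φs ((zbar a : ℝ) / τ)) * sgn (zbar a)) :=
      (measurable_from_top (f := fun z : ℤ => (φc ((z:ℝ)/τ) - φs ((z:ℝ)/τ)) * sgn z)).comp hz
    refine Integrable.mono' (integrable_const (φmax + φmax)) hm.aestronglyMeasurable ?_
    filter_upwards with a
    rw [Real.norm_eq_abs, abs_mul]
    calc |φc ((zbar a : ℝ)/τ) - φs ((zbar a : ℝ)/τ)| * |sgn (zbar a)|
        ≤ (|φc ((zbar a : ℝ)/τ)| + |φs ((zbar a : ℝ)/τ)|) * 1 := by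
          exact mul_le_mul (abs_sub _ _) (hsgn_bd _) (abs_nonneg _)
            (by positivity)
      _ ≤ φmax + φmax := by
          rw [mul_one]; exact add_le_add (hφc _) (hφs _)
  -- stationarity: ∫ |z⁺| = ∫ |z̄|
  have hstat' : ∫ a, |((zplus a : ℤ) : ℝ)| ∂μ = ∫ a, |((zbar a : ℤ) : ℝ)| ∂μ := by
    have hf : Measurable fun z : ℤ => |(z : ℝ)| := measurable_from_top
    have h1 : ∫ z, |((z:ℤ):ℝ)| ∂(μ.map zplus) = ∫ a, |((zplus a : ℤ):ℝ)| ∂μ :=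
      integral_map hzplus_meas.aemeasurable hf.aestronglyMeasurable
    have h2 : ∫ z, |((z:ℤ):ℝ)| ∂(μ.map zbar) = ∫ a, |((zbar a : ℤ):ℝ)| ∂μ :=
      integral_map hz.aemeasurable hf.aestronglyMeasurable
    have : μ.map zplus = μ.map zbar := hstat
    rw [← h1, ← h2, this]
  -- key partition identity
  have hpart : ∫ a, ((ac a : ℝ) - (as a : ℝ)) * sgn (zbar a) ∂μ
      = ε * ∫ a, (φc ((zbar a : ℝ) / τ) - φs ((zbar a : ℝ) / τ)) * sgn (zbar a) ∂μ := by
    set S : ℤ → Set Ω := fun z => zbar ⁻¹' {z} with hSdef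
    have hSm : ∀ z, MeasurableSet (S z) := fun z => hz (measurableSet_singleton z)
    have hdisj : Pairwise (Function.onFun Disjoint S) := by
      intro i j hij
      simp only [Function.onFun, Set.disjoint_left]
      intro a hai haj
      exact hij ((Set.mem_preimage.mp hai).symm.trans (Set.mem_preimage.mp haj))
    have hU : ⋃ z, S z = Set.univ := by
      ext a; simp [S]
    have expand : ∀ (f : Ω → ℝ), Integrable f μ →
        ∫ a, f a ∂μ = ∑' z : ℤ, ∫ a in S z, f a ∂μ := by
      intro f hf
      rw [← setIntegral_univ (μ := μ) (f := f), ← hU]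
      exact integral_iUnion hSm hdisj (hU ▸ hf.integrableOn)
    rw [expand _ I4, expand _ I5, ← tsum_mul_left]
    refine tsum_congr fun z => ?_
    have hEq1 : ∫ a in S z, ((ac a : ℝ) - (as a : ℝ)) * sgn (zbar a) ∂μ
        = ∫ a in S z, ((ac a : ℝ) - (as a : ℝ)) * sgn z ∂μ := by
      refine setIntegral_congr_fun (hSm z) ?_
      intro a ha
      have : zbar a = z := ha
      simp only [this]
    have hEq2 : ∫ a in S z, (φc ((zbar a : ℝ) / τ) - φs ((zbar a : ℝ) / τ)) * sgn (zbar a) ∂μ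
        = ∫ a in S z, (φc ((z : ℝ) / τ) - φs ((z : ℝ) / τ)) * sgn z ∂μ := by
      refine setIntegral_congr_fun (hSm z) ?_
      intro a ha
      have : zbar a = z := ha
      simp only [this]
    rw [hEq1, hEq2, integral_mul_const, setIntegral_const, hcond z, smul_eq_mul, measureReal_def]
    ring
  -- assemble
  have split1 : ∫ a, ((zplus a : ℤ) : ℝ) * (sgn (zplus a) - sgn (zbar a)) ∂μ
      = (∫ a, ((zplus a : ℤ):ℝ) * sgn (zplus a) ∂μ)
        - ∫ a, ((zplus a : ℤ):ℝ) * sgn (zbar a) ∂μ := by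
    rw [← integral_sub I1 I2]
    congr 1; funext a; ring
  have e1 : ∫ a, ((zplus a : ℤ):ℝ) * sgn (zplus a) ∂μ
      = ∫ a, ((zbar a : ℤ):ℝ) * sgn (zbar a) ∂μ := by
    calc ∫ a, ((zplus a : ℤ):ℝ) * sgn (zplus a) ∂μ
        = ∫ a, |((zplus a : ℤ):ℝ)| ∂μ := by
          congr 1; funext a; exact habs _
      _ = ∫ a, |((zbar a : ℤ):ℝ)| ∂μ := hstat'
      _ = ∫ a, ((zbar a : ℤ):ℝ) * sgn (zbar a) ∂μ := by
          congr 1; funext a; exact (habs _).symm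
  have e2 : ∫ a, ((zplus a : ℤ):ℝ) * sgn (zbar a) ∂μ
      = (∫ a, ((zbar a : ℤ):ℝ) * sgn (zbar a) ∂μ)
        + ∫ a, ((ac a : ℝ) - (as a : ℝ)) * sgn (zbar a) ∂μ := by
    rw [← integral_add I3 I4]
    congr 1; funext a; rw [hcast a]; ring
  rw [split1, e1, e2, hpart]
  ring
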